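/- Let X : ℝ → Sym⁺(n) solve Ẋ = -X + A with A positive definite, and let δX(t) solve the linearized equation δẊ = -δX (i.e., δX(t) = e^{-t}δX(0)). Then with δZ = X^{-1/2} δX X^{-1/2}, one has tr((X⁻¹δX)²) = tr(δZ²) and d/dt tr((X⁻¹δX)²) = -2 tr(δZ X^{-1/2} A X^{-1/2} δZ) < 0 whenever δX ≠ 0. -/

import Mathlib

open Matrix

attribute [local instance] Matrix.frobeniusNormedAddCommGroup Matrix.frobeniusNormedSpace

attribute [local instance] Matrix.frobeniusNormedRing Matrix.frobeniusNormedAlgebra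

namespace LogDetAux

variable {n : ℕ}

lemma hasDerivAt_trace {f : ℝ → Matrix (Fin n) (Fin n) ℝ} {f' : Matrix (Fin n) (Fin n) ℝ}
    {t : ℝ} (hf : HasDerivAt f f' t) :
    HasDerivAt (fun τ => (f τ).trace) f'.trace t := by
  have h := ((Matrix.traceLinearMap (Fin n) ℝ ℝ).toContinuousLinearMap.hasFDerivAt
    (x := f t)).comp_hasDerivAt t hf
  exact h

lemma hasDerivAt_matrix_inv (X : ℝ → Matrix (Fin n) (Fin n) ℝ) {E : Matrix (Fin n) (Fin n) ℝ}
    {t : ℝ} (hu : IsUnit (X t)) (hX : HasDerivAt X E t) :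
    HasDerivAt (fun τ => (X τ)⁻¹) (-((X t)⁻¹ * E * (X t)⁻¹)) t := by
  obtain ⟨u, hu'⟩ := hu
  have h1 : HasFDerivAt Ring.inverse
      (-ContinuousLinearMap.mulLeftRight ℝ (Matrix (Fin n) (Fin n) ℝ) ↑u⁻¹ ↑u⁻¹) (X t) := by
    rw [← hu']; exact hasFDerivAt_ringInverse u
  have h2 := h1.comp_hasDerivAt t hX
  have h3 : (fun τ => Ring.inverse (X τ)) = fun τ => (X τ)⁻¹ := by
    funext τ; rw [Matrix.nonsing_inv_eq_ringInverse]
  have h4 : (↑u⁻¹ : Matrix (Fin n) (Fin n) ℝ) = (X t)⁻¹ := by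
    rw [← hu', Matrix.coe_units_inv]
  rw [Function.comp_def, h3] at h2
  simp [h4] at h2
  exact h2

lemma trace_transpose_mul_self_pos {M : Matrix (Fin n) (Fin n) ℝ} (hM : M ≠ 0) :
    0 < (Mᵀ * M).trace := by
  have hM' : ∃ i j, M i j ≠ 0 := by
    by_contra h
    push_neg at h
    exact hM (by ext i j; simp [h])
  obtain ⟨i, j, hij⟩ := hM'
  have : (Mᵀ * M).trace = ∑ j, ∑ i, (M i j) ^ 2 := by
    simp [Matrix.trace, Matrix.mul_apply, Matrix.diag, sq]
  rw [this]
  apply Finset.sum_pos' (fun _ _ => Finset.sum_nonneg fun _ _ => sq_nonneg _)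
  exact ⟨j, Finset.mem_univ _, Finset.sum_pos' (fun _ _ => sq_nonneg _)
    ⟨i, Finset.mem_univ _, by positivity⟩⟩

lemma left_cancel_zero {P M : Matrix (Fin n) (Fin n) ℝ} (hP : IsUnit P)
    (h : P * M = 0) : M = 0 := by
  have hd := (Matrix.isUnit_iff_isUnit_det _).mp hP
  calc M = P⁻¹ * (P * M) := by rw [← Matrix.mul_assoc, Matrix.nonsing_inv_mul _ hd, Matrix.one_mul]
  _ = 0 := by rw [h, Matrix.mul_zero]

lemma right_cancel_zero {P M : Matrix (Fin n) (Fin n) ℝ} (hP : IsUnit P)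
    (h : M * P = 0) : M = 0 := by
  have hd := (Matrix.isUnit_iff_isUnit_det _).mp hP
  calc M = (M * P) * P⁻¹ := by rw [Matrix.mul_assoc, Matrix.mul_nonsing_inv _ hd, Matrix.mul_one]
  _ = 0 := by rw [h, Matrix.zero_mul]

open scoped MatrixOrder in
lemma exists_sqrt {A : Matrix (Fin n) (Fin n) ℝ} (hA : A.PosDef) :
    ∃ Q : Matrix (Fin n) (Fin n) ℝ, Q * Q = A ∧ Qᴴ = Q :=
  ⟨CFC.sqrt A, CFC.sqrt_mul_sqrt_self A hA.posSemidef.nonneg, (CFC.sqrt_nonneg A).posSemidef.1⟩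

end LogDetAux

set_option maxHeartbeats 2000000 in
/-- Along the flow Ẋ = -X + A with linearization δẊ = -δX, setting
δZ = X^{-1/2} δX X^{-1/2} (S t denotes the positive definite square root of
X(t)⁻¹), one has tr((X⁻¹δX)²) = tr(δZ²) and
d/dt tr((X⁻¹δX)²) = -2 tr(δZ X^{-1/2} A X^{-1/2} δZ) < 0 whenever δX ≠ 0. -/
theorem logdet_flow_differential_contraction
    {n : ℕ} (A : Matrix (Fin n) (Fin n) ℝ) (hA : A.PosDef)
    (X δX S : ℝ → Matrix (Fin n) (Fin n) ℝ)
    (hXpos : ∀ t, (X t).PosDef)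
    (hXflow : ∀ t, HasDerivAt X (-(X t) + A) t)
    (hδXsymm : ∀ t, (δX t).IsSymm)
    (hδXflow : ∀ t, HasDerivAt δX (-(δX t)) t)
    (hSpos : ∀ t, (S t).PosDef)
    (hSsq : ∀ t, S t * S t = (X t)⁻¹) :
    ∀ t : ℝ,
      ((((X t)⁻¹ * δX t) ^ 2).trace = ((S t * δX t * S t) ^ 2).trace) ∧
      HasDerivAt (fun τ => (((X τ)⁻¹ * δX τ) ^ 2).trace)
        (-2 * ((S t * δX t * S t) * (S t * A * S t) * (S t * δX t * S t)).trace) t ∧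
      (δX t ≠ 0 →
        -2 * ((S t * δX t * S t) * (S t * A * S t) * (S t * δX t * S t)).trace < 0) := by
  intro t
  set B := (X t)⁻¹ with hB
  set D := δX t with hD
  set s := S t with hs
  have hXu : IsUnit (X t) := (hXpos t).isUnit
  have hXdet : IsUnit (X t).det := (Matrix.isUnit_iff_isUnit_det _).mp hXu
  have hBX : B * X t = 1 := Matrix.nonsing_inv_mul _ hXdet
  have hXB : X t * B = 1 := Matrix.mul_nonsing_inv _ hXdet
  have hss : s * s = B := hSsq t
  -- trace identity equating both quadratic forms
  have key : ((s * D * s) * (s * A * s) * (s * D * s)).trace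
      = (B * A * B * D * B * D).trace := by
    have h1 : (s * D * s) * (s * A * s) * (s * D * s)
        = s * (D * (B * (A * (B * (D * s))))) := by
      simp only [mul_assoc]
      rw [show s * (A * (s * (s * (D * s)))) = s * (A * (B * (D * s))) by
        rw [← mul_assoc s s, hss]]
      rw [show s * (s * (A * (B * (D * s)))) = B * (A * (B * (D * s))) by
        rw [← mul_assoc s s, hss]]
    rw [h1, Matrix.trace_mul_comm]
    have h2 : (D * (B * (A * (B * (D * s))))) * s = D * (B * (A * (B * (D * B)))) := by
      simp only [mul_assoc, hss]
    rw [h2, Matrix.trace_mul_comm]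
    simp only [mul_assoc]
  -- part 1
  have part1 : ((B * D) ^ 2).trace = ((s * D * s) ^ 2).trace := by
    have h1 : (s * D * s) ^ 2 = s * (D * (B * (D * s))) := by
      rw [pow_two]
      simp only [mul_assoc]
      rw [show s * (s * (D * s)) = B * (D * s) by rw [← mul_assoc s s, hss]]
    have l : ((B * D) ^ 2).trace = (B * (D * (B * D))).trace := by
      rw [pow_two]; simp only [mul_assoc]
    have r : ((s * D * s) ^ 2).trace = (B * (D * (B * D))).trace := by
      rw [h1, Matrix.trace_mul_comm]
      rw [show (D * (B * (D * s))) * s = D * (B * (D * B)) by simp only [mul_assoc, hss]]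
      rw [Matrix.trace_mul_comm]
      simp only [mul_assoc]
    rw [l, r]
  refine ⟨part1, ?_, ?_⟩
  · -- derivative
    have hinv : HasDerivAt (fun τ => (X τ)⁻¹) (-(B * (-(X t) + A) * B)) t :=
      LogDetAux.hasDerivAt_matrix_inv X hXu (hXflow t)
    have hF : HasDerivAt (fun τ => (X τ)⁻¹ * δX τ)
        ((-(B * (-(X t) + A) * B)) * D + B * (-D)) t := hinv.mul (hδXflow t)
    have hG := hF.mul hF
    have hGt := LogDetAux.hasDerivAt_trace hG
    have hfun : (fun τ => (((X τ)⁻¹ * δX τ) * ((X τ)⁻¹ * δX τ)).trace)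
        = fun τ => (((X τ)⁻¹ * δX τ) ^ 2).trace := by
      funext τ; rw [pow_two]
    simp only [Pi.mul_apply] at hGt
    rw [hfun] at hGt
    convert hGt using 1
    -- value identity
    have hBEB : B * (-(X t) + A) * B = -B + B * A * B := by
      rw [mul_add, add_mul, mul_neg, neg_mul]
      rw [show B * X t * B = B by rw [hBX, Matrix.one_mul]]
    have hF' : (-(B * (-(X t) + A) * B)) * D + B * (-D) = -(B * A * B * D) := by
      rw [hBEB]
      noncomm_ring
    rw [hF', key]
    have e1 : ((-(B * A * B * D)) * (B * D) + (B * D) * (-(B * A * B * D))).trace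
        = -2 * ((B * A * B * D) * (B * D)).trace := by
      rw [Matrix.trace_add, neg_mul, mul_neg, Matrix.trace_neg, Matrix.trace_neg,
        Matrix.trace_mul_comm (B * D)]
      ring
    rw [e1]
    congr 1
    simp only [mul_assoc]
  · -- negativity
    intro hDne
    rw [key]
    have hposgoal : 0 < (B * A * B * D * B * D).trace → -2 * (B * A * B * D * B * D).trace < 0 := by
      intro h; linarith
    apply hposgoal
    -- symmetry facts
    have hDsymm : Dᵀ = D := hδXsymm t
    have hssymm : sᵀ = s := by
      have h : sᴴ = s := (hSpos t).isHermitian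
      rwa [Matrix.conjTranspose_eq_transpose_of_trivial] at h
    have hBsymm : Bᵀ = B := by
      have h : (X t)ᵀ = X t := by
        have h' : (X t)ᴴ = X t := (hXpos t).isHermitian
        rwa [Matrix.conjTranspose_eq_transpose_of_trivial] at h'
      rw [hB, Matrix.transpose_nonsing_inv, h]
    -- square root of A
    obtain ⟨Q, hQQ, hQH⟩ := LogDetAux.exists_sqrt hA
    have hQsymm : Qᵀ = Q := by
      have h : Qᴴ = Q := hQH
      rwa [Matrix.conjTranspose_eq_transpose_of_trivial] at h
    have hQdet : IsUnit Q.det := by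
      have : Q.det * Q.det = A.det := by rw [← Matrix.det_mul, hQQ]
      have hAdet : (0 : ℝ) < A.det := hA.det_pos
      refine isUnit_iff_ne_zero.mpr fun h0 => ?_
      rw [h0, mul_zero] at this
      exact hAdet.ne (this)
    have hQu : IsUnit Q := (Matrix.isUnit_iff_isUnit_det _).mpr hQdet
    have hsu : IsUnit s := (hSpos t).isUnit
    have hBu : IsUnit B := ((hXpos t).inv).isUnit
    -- the matrix M
    set M := Q * B * D * s with hM
    have hMne : M ≠ 0 := by
      intro h0
      apply hDne
      have h1 : Q * (B * D * s) = 0 := by rw [← Matrix.mul_assoc, ← Matrix.mul_assoc]; exact h0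
      have h2 : B * (D * s) = 0 := by
        have := LogDetAux.left_cancel_zero hQu h1
        rwa [Matrix.mul_assoc] at this
      have h3 : D * s = 0 := LogDetAux.left_cancel_zero hBu h2
      exact LogDetAux.right_cancel_zero hsu h3
    have hpos := LogDetAux.trace_transpose_mul_self_pos hMne
    have hMT : Mᵀ = s * (D * (B * Q)) := by
      rw [hM]
      simp only [Matrix.transpose_mul, hQsymm, hBsymm, hDsymm, hssymm, mul_assoc]
    have e1 : Mᵀ * M = s * (D * (B * (A * (B * (D * s))))) := by
      rw [hMT, hM]
      simp only [mul_assoc]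
      rw [show Q * (Q * (B * (D * s))) = A * (B * (D * s)) by rw [← mul_assoc Q Q, hQQ]]
    have e2 : (Mᵀ * M).trace = (B * A * B * D * B * D).trace := by
      rw [e1, Matrix.trace_mul_comm]
      rw [show (D * (B * (A * (B * (D * s))))) * s = D * (B * (A * (B * (D * B)))) by
        simp only [mul_assoc, hss]]
      rw [Matrix.trace_mul_comm]
      simp only [mul_assoc]
    rw [← e2]
    exact hpos
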